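/- In the complete bipartite double-oral-auction mechanism, the potential Φ_P = Σ_{S} P(S) + Σ_{B} (1 − P(B)) is non-increasing during any maximal interval of time in which the number of matched pairs stays constant; moreover Φ_P is always an integer multiple of ε and is bounded above by n. -/

import Mathlib

open Finset

/-- A market: buyers `B`, sellers `S`, trading edges `E`, valuations in `[0,1]`. -/
structure Market (B S : Type*) [Fintype B] [Fintype S] where
  E : Finset (B × S)
  valB : B → ℝ
  valS : S → ℝ
  valB_nonneg : ∀ b, 0 ≤ valB b
  valB_le_one : ∀ b, valB b ≤ 1
  valS_nonneg : ∀ s, 0 ≤ valS s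
  valS_le_one : ∀ s, valS s ≤ 1

/-- A state of the market: prices submitted by buyers and sellers, and a matching. -/
structure MState (B S : Type*) where
  PB : B → ℝ
  PS : S → ℝ
  M : Finset (B × S)

variable {B S : Type*} [Fintype B] [Fintype S]

/-- `Mat` is a matching contained in the edge set. -/
def IsMatching (Mk : Market B S) (Mat : Finset (B × S)) : Prop :=
  Mat ⊆ Mk.E ∧ (∀ p ∈ Mat, ∀ q ∈ Mat, p.1 = q.1 → p = q) ∧
    (∀ p ∈ Mat, ∀ q ∈ Mat, p.2 = q.2 → p = q)

def BMatched (st : MState B S) (b : B) : Prop := ∃ s, (b, s) ∈ st.M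
def SMatched (st : MState B S) (s : S) : Prop := ∃ b, (b, s) ∈ st.M

/-- A valid state: bids below valuations, offers above opportunity costs,
and within a matched pair the bid is at least the offer. -/
def ValidState (Mk : Market B S) (st : MState B S) : Prop :=
  IsMatching Mk st.M ∧ (∀ b, st.PB b ≤ Mk.valB b) ∧ (∀ s, Mk.valS s ≤ st.PS s) ∧
    ∀ p ∈ st.M, st.PS p.2 ≤ st.PB p.1

/-- Social welfare of a matching. -/
def SW (Mk : Market B S) (Mat : Finset (B × S)) : ℝ :=
  ∑ p ∈ Mat, (Mk.valB p.1 - Mk.valS p.2)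

/-- Stable state: no bid above an offer on any edge, unmatched agents submit their
valuations, matched pairs have equal prices. -/
def IsStable (Mk : Market B S) (st : MState B S) : Prop :=
  (∀ p ∈ Mk.E, st.PB p.1 ≤ st.PS p.2) ∧
  (∀ b, ¬ BMatched st b → st.PB b = Mk.valB b) ∧
  (∀ s, ¬ SMatched st s → st.PS s = Mk.valS s) ∧
  ∀ p ∈ st.M, st.PB p.1 = st.PS p.2

/-- ε-stable state. -/
def IsEpsStable (Mk : Market B S) (ε : ℝ) (st : MState B S) : Prop :=
  (∀ p ∈ Mk.E, st.PB p.1 - st.PS p.2 ≤ ε) ∧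
  (∀ b, ¬ BMatched st b → st.PB b = Mk.valB b) ∧
  (∀ s, ¬ SMatched st s → st.PS s = Mk.valS s) ∧
  ∀ p ∈ st.M, st.PB p.1 = st.PS p.2

/-- `x` is an integer multiple of `ε`. -/
def MulEps (ε x : ℝ) : Prop := ∃ k : ℤ, x = k * ε

variable [DecidableEq B] [DecidableEq S]

/-- Seller `s` is ε-interested in buyer `b` bidding `b'`. -/
def SellerInterested (Mk : Market B S) (ε : ℝ) (st : MState B S) (b' : ℝ) (b : B) (s : S) : Prop :=
  (b, s) ∈ Mk.E ∧ ((¬ SMatched st s ∧ st.PS s ≤ b') ∨ (SMatched st s ∧ st.PS s + ε ≤ b'))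

/-- Buyer `b` is ε-interested in seller `s` offering `s'`. -/
def BuyerInterested (Mk : Market B S) (ε : ℝ) (st : MState B S) (s' : ℝ) (s : S) (b : B) : Prop :=
  (b, s) ∈ Mk.E ∧ ((¬ BMatched st b ∧ s' ≤ st.PB b) ∨ (BMatched st b ∧ s' + ε ≤ st.PB b))

/-- Increment rule for a buyer: a new bid is at most (lowest neighbouring offer + ε) and
at most the lowest offer of an unmatched neighbouring seller. -/
def BuyIncrOK (Mk : Market B S) (ε : ℝ) (st : MState B S) (b : B) (b' : ℝ) : Prop :=
  (∀ s, (b, s) ∈ Mk.E → b' ≤ st.PS s + ε) ∧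
  (∀ s, (b, s) ∈ Mk.E → ¬ SMatched st s → b' ≤ st.PS s)

/-- Increment rule for a seller. -/
def SellIncrOK (Mk : Market B S) (ε : ℝ) (st : MState B S) (s : S) (s' : ℝ) : Prop :=
  (∀ b, (b, s) ∈ Mk.E → st.PB b - ε ≤ s') ∧
  (∀ b, (b, s) ∈ Mk.E → ¬ BMatched st b → st.PB b ≤ s')

/-- Match `b` with `s` at price `price`, displacing any previous partner of `s` (resp. `b`)
and equalizing the two submitted prices. -/
def matchPair (st : MState B S) (b : B) (s : S) (price : ℝ) : MState B S where
  PB := Function.update st.PB b price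
  PS := Function.update st.PS s price
  M := insert (b, s) (st.M.filter fun p => p.1 ≠ b ∧ p.2 ≠ s)

/-- One legal move of the DOA mechanism (Mechanism 1): an arbitrary recognized unmatched
agent either submits an improving price (respecting the minimum-increment and increment
rules, when no counterpart is interested) or matches with an ε-interested counterpart,
giving priority to unmatched counterparts. -/
inductive Step (Mk : Market B S) (ε : ℝ) : MState B S → MState B S → Prop
  | buyBid (st : MState B S) (b : B) (b' : ℝ) :
      ¬ BMatched st b → st.PB b < b' → b' ≤ Mk.valB b → MulEps ε b' →
      BuyIncrOK Mk ε st b b' →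
      (∀ s, ¬ SellerInterested Mk ε st b' b s) →
      Step Mk ε st ⟨Function.update st.PB b b', st.PS, st.M⟩
  | buyMatch (st : MState B S) (b : B) (b' : ℝ) (s : S) :
      ¬ BMatched st b → st.PB b ≤ b' → b' ≤ Mk.valB b → MulEps ε b' →
      BuyIncrOK Mk ε st b b' →
      SellerInterested Mk ε st b' b s →
      ((∃ s₀, SellerInterested Mk ε st b' b s₀ ∧ ¬ SMatched st s₀) → ¬ SMatched st s) →
      Step Mk ε st (matchPair st b s b')
  | sellOffer (st : MState B S) (s : S) (s' : ℝ) :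
      ¬ SMatched st s → s' < st.PS s → Mk.valS s ≤ s' → MulEps ε s' →
      SellIncrOK Mk ε st s s' →
      (∀ b, ¬ BuyerInterested Mk ε st s' s b) →
      Step Mk ε st ⟨st.PB, Function.update st.PS s s', st.M⟩
  | sellMatch (st : MState B S) (s : S) (s' : ℝ) (b : B) :
      ¬ SMatched st s → s' ≤ st.PS s → Mk.valS s ≤ s' → MulEps ε s' →
      SellIncrOK Mk ε st s s' →
      BuyerInterested Mk ε st s' s b →
      ((∃ b₀, BuyerInterested Mk ε st s' s b₀ ∧ ¬ BMatched st b₀) → ¬ BMatched st b) →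
      Step Mk ε st (matchPair st b s s')

/-- A valid starting state: valid, bids below offers on every edge, prices in `[0,1]`
and integer multiples of `ε`. -/
def ValidStart (Mk : Market B S) (ε : ℝ) (st : MState B S) : Prop :=
  ValidState Mk st ∧ (∀ p ∈ Mk.E, st.PB p.1 ≤ st.PS p.2) ∧
  (∀ b, 0 ≤ st.PB b) ∧ (∀ s, st.PS s ≤ 1) ∧
  (∀ b, MulEps ε (st.PB b)) ∧ (∀ s, MulEps ε (st.PS s))

/-- Reachability by a sequence of legal moves. -/
def Reachable (Mk : Market B S) (ε : ℝ) : MState B S → MState B S → Prop :=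
  Relation.ReflTransGen (Step Mk ε)

/-- The potential `Φ_P = Σ_S P(S) + Σ_B (1 − P(B))`. -/
def Phi (st : MState B S) : ℝ := ∑ s : S, st.PS s + ∑ b : B, (1 - st.PB b)

section AuxLemmas

lemma MulEps.add' {ε x y : ℝ} (hx : MulEps ε x) (hy : MulEps ε y) : MulEps ε (x + y) := by
  obtain ⟨k, rfl⟩ := hx; obtain ⟨m, rfl⟩ := hy
  exact ⟨k + m, by push_cast; ring⟩

lemma MulEps.sub' {ε x y : ℝ} (hx : MulEps ε x) (hy : MulEps ε y) : MulEps ε (x - y) := by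
  obtain ⟨k, rfl⟩ := hx; obtain ⟨m, rfl⟩ := hy
  exact ⟨k - m, by push_cast; ring⟩

lemma mulEps_sum {ε : ℝ} {ι : Type*} (t : Finset ι) (f : ι → ℝ)
    (h : ∀ i ∈ t, MulEps ε (f i)) : MulEps ε (∑ i ∈ t, f i) := by
  classical
  induction t using Finset.induction_on with
  | empty => exact ⟨0, by simp⟩
  | insert _ _ hx ih =>
    rw [Finset.sum_insert hx]
    exact (h _ (Finset.mem_insert_self _ _)).add'
      (ih fun i hi => h i (Finset.mem_insert_of_mem hi))

lemma mulEps_le {ε x y : ℝ} (hε : 0 < ε) (hx : MulEps ε x) (hy : MulEps ε y)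
    (h : x < y + ε) : x ≤ y := by
  obtain ⟨k, rfl⟩ := hx; obtain ⟨m, rfl⟩ := hy
  have hk : (k : ℝ) * ε < ((m : ℝ) + 1) * ε := by linarith
  have hk2 : (k : ℝ) < (m : ℝ) + 1 := lt_of_mul_lt_mul_right hk hε.le
  have : k ≤ m := by exact_mod_cast Int.lt_add_one_iff.mp (by exact_mod_cast hk2)
  exact mul_le_mul_of_nonneg_right (by exact_mod_cast this) hε.le

lemma sum_comp_update {ι : Type*} [Fintype ι] [DecidableEq ι]
    (g : ℝ → ℝ) (f : ι → ℝ) (i : ι) (v : ℝ) :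
    ∑ x, g (Function.update f i v x) = ∑ x, g (f x) + (g v - g (f i)) := by
  have h : ∀ x : ι, g (Function.update f i v x)
      = Function.update (fun x => g (f x)) i (g v) x := by
    intro x; by_cases hx : x = i
    · subst hx; simp
    · simp [Function.update_of_ne hx]
  rw [Finset.sum_congr rfl fun x _ => h x,
    Finset.sum_update_of_mem (Finset.mem_univ i),
    Finset.sum_eq_sum_sdiff_singleton_add (Finset.mem_univ i) (fun x => g (f x))]
  ring

end AuxLemmas

section Invariant

variable {B S : Type*} [Fintype B] [Fintype S] [DecidableEq B] [DecidableEq S]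

/-- The key invariant maintained along every run of the mechanism on a
complete trading graph. -/
def DOAInv (ε : ℝ) (st : MState B S) : Prop :=
  (∀ b, 0 ≤ st.PB b) ∧ (∀ s, st.PS s ≤ 1) ∧
  (∀ b, MulEps ε (st.PB b)) ∧ (∀ s, MulEps ε (st.PS s)) ∧
  (∀ b s, ¬ BMatched st b → st.PB b ≤ st.PS s) ∧
  (∀ b s, ¬ SMatched st s → st.PB b ≤ st.PS s) ∧
  (∀ p ∈ st.M, st.PB p.1 = st.PS p.2)

lemma inv_start (Mk : Market B S) (hE : Mk.E = Finset.univ) (ε : ℝ)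
    {st : MState B S} (h : ValidStart Mk ε st) : DOAInv ε st := by
  obtain ⟨⟨hM, _hvb, _hvs, hMps⟩, hEps, h0, hone, hmb, hms⟩ := h
  have hedge : ∀ (b : B) (s : S), (b, s) ∈ Mk.E := fun b s => by
    rw [hE]; exact Finset.mem_univ _
  refine ⟨h0, hone, hmb, hms, ?_, ?_, ?_⟩
  · intro b s _; exact hEps (b, s) (hedge b s)
  · intro b s _; exact hEps (b, s) (hedge b s)
  · intro p hp
    exact le_antisymm (hEps p (hM.1 hp)) (hMps p hp)

lemma inv_step (Mk : Market B S) (hE : Mk.E = Finset.univ) {ε : ℝ} (hε : 0 < ε)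
    {st st' : MState B S} (hI : DOAInv ε st) (h : Step Mk ε st st') : DOAInv ε st' := by
  obtain ⟨i1, i2, i3, i4, i5, i6, i7⟩ := hI
  have hedge : ∀ (b : B) (s : S), (b, s) ∈ Mk.E := fun b s => by
    rw [hE]; exact Finset.mem_univ _
  cases h with
  | buyBid b b' hun hlt hle hme hok hni =>
    -- key : the new bid does not exceed any offer
    have key : ∀ s, b' ≤ st.PS s := by
      intro s
      have hni' := hni s
      simp only [SellerInterested, not_and, not_or, not_le] at hni'
      obtain ⟨h1, h2⟩ := hni' (hedge b s)
      by_cases hs : SMatched st s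
      · exact mulEps_le hε hme (i4 s) (by have := h2 hs; linarith)
      · have := h1 hs; linarith
    have hMB : ∀ b₂, BMatched (⟨Function.update st.PB b b', st.PS, st.M⟩ : MState B S) b₂
        ↔ BMatched st b₂ := fun b₂ => Iff.rfl
    refine ⟨?_, i2, ?_, i4, ?_, ?_, ?_⟩
    · intro b₂; by_cases hb : b₂ = b <;> simp [hb, Function.update]
      · linarith [i1 b]
      · exact i1 b₂
    · intro b₂; by_cases hb : b₂ = b <;> simp [hb, Function.update]
      · exact hme
      · exact i3 b₂
    · intro b₂ s₂ hm
      rw [hMB] at hm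
      by_cases hb : b₂ = b <;> simp [hb, Function.update]
      · exact key s₂
      · exact i5 b₂ s₂ hm
    · intro b₂ s₂ hm
      have hm' : ¬ SMatched st s₂ := hm
      by_cases hb : b₂ = b <;> simp [hb, Function.update]
      · exact key s₂
      · exact i6 b₂ s₂ hm'
    · intro p hp
      have hne : p.1 ≠ b := by rintro h; exact hun ⟨p.2, by rwa [← h]⟩
      simp only [Function.update, hne]
      simpa [hne] using i7 p hp
  | sellOffer s s' hun hlt hge hme hok hni =>
    have key : ∀ b, st.PB b ≤ s' := by
      intro b
      have hni' := hni b
      simp only [BuyerInterested, not_and, not_or, not_le] at hni'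
      obtain ⟨h1, h2⟩ := hni' (hedge b s)
      by_cases hb : BMatched st b
      · exact mulEps_le hε (i3 b) hme (by have := h2 hb; linarith)
      · have := h1 hb; linarith
    refine ⟨i1, ?_, i3, ?_, ?_, ?_, ?_⟩
    · intro s₂; by_cases hs : s₂ = s <;> simp [hs, Function.update]
      · linarith [i2 s]
      · exact i2 s₂
    · intro s₂; by_cases hs : s₂ = s <;> simp [hs, Function.update]
      · exact hme
      · exact i4 s₂
    · intro b₂ s₂ _
      by_cases hs : s₂ = s <;> simp [hs, Function.update]
      · exact key b₂
      · exact i5 b₂ s₂ ‹_›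
    · intro b₂ s₂ _
      by_cases hs : s₂ = s <;> simp [hs, Function.update]
      · exact key b₂
      · exact i6 b₂ s₂ ‹_›
    · intro p hp
      have hne : p.2 ≠ s := by rintro h; exact hun ⟨p.1, by rwa [← h]⟩
      simp only [Function.update, hne]
      simpa [hne] using i7 p hp
  | buyMatch b b' s hun hle hlev hme hok hint hpri =>
    have h0b : 0 ≤ b' := le_trans (i1 b) hle
    have hb1 : b' ≤ 1 := le_trans hlev (Mk.valB_le_one b)
    have hPSs : st.PS s ≤ b' := by
      rcases hint.2 with ⟨_, h⟩ | ⟨_, h⟩ <;> linarith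
    have hmem : ∀ p : B × S, p ∈ (matchPair st b s b').M ↔
        p = (b, s) ∨ (p ∈ st.M ∧ p.1 ≠ b ∧ p.2 ≠ s) := by
      intro p
      simp [matchPair, Finset.mem_insert, Finset.mem_filter, Prod.ext_iff]
    have hbm : BMatched (matchPair st b s b') b := ⟨s, (hmem _).2 (Or.inl rfl)⟩
    have hsm : SMatched (matchPair st b s b') s := ⟨b, (hmem _).2 (Or.inl rfl)⟩
    refine ⟨?_, ?_, ?_, ?_, ?_, ?_, ?_⟩
    · intro b₂
      show 0 ≤ Function.update st.PB b b' b₂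
      by_cases hb : b₂ = b
      · subst hb; rw [Function.update_self]; exact h0b
      · rw [Function.update_of_ne hb]; exact i1 b₂
    · intro s₂
      show Function.update st.PS s b' s₂ ≤ 1
      by_cases hs : s₂ = s
      · subst hs; rw [Function.update_self]; exact hb1
      · rw [Function.update_of_ne hs]; exact i2 s₂
    · intro b₂
      show MulEps ε (Function.update st.PB b b' b₂)
      by_cases hb : b₂ = b
      · subst hb; rw [Function.update_self]; exact hme
      · rw [Function.update_of_ne hb]; exact i3 b₂
    · intro s₂
      show MulEps ε (Function.update st.PS s b' s₂)
      by_cases hs : s₂ = s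
      · subst hs; rw [Function.update_self]; exact hme
      · rw [Function.update_of_ne hs]; exact i4 s₂
    · intro b₂ s₂ hm
      have hb2 : b₂ ≠ b := fun h => hm (h ▸ hbm)
      have hcases : ¬ BMatched st b₂ ∨ (b₂, s) ∈ st.M := by
        by_contra hc
        push_neg at hc
        obtain ⟨⟨s₃, hs₃⟩, hn⟩ := hc
        have hs3 : s₃ ≠ s := fun h => hn (h ▸ hs₃)
        exact hm ⟨s₃, (hmem _).2 (Or.inr ⟨hs₃, hb2, hs3⟩)⟩
      show Function.update st.PB b b' b₂ ≤ Function.update st.PS s b' s₂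
      rw [Function.update_of_ne hb2]
      by_cases hs2 : s₂ = s
      · subst hs2; rw [Function.update_self]
        rcases hcases with hu | hm2
        · exact le_trans (i5 b₂ s₂ hu) hPSs
        · have h3 : st.PB b₂ = st.PS s₂ := i7 (b₂, s₂) hm2
          rw [h3]; exact hPSs
      · rw [Function.update_of_ne hs2]
        rcases hcases with hu | hm2
        · exact i5 b₂ s₂ hu
        · have hsm' : SMatched st s := ⟨b₂, hm2⟩
          have h1 : st.PS s + ε ≤ b' := by
            rcases hint.2 with ⟨h, _⟩ | ⟨_, h⟩
            · exact absurd hsm' h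
            · exact h
          have h2 : b' ≤ st.PS s₂ + ε := hok.1 s₂ (hedge b s₂)
          have h3 : st.PB b₂ = st.PS s := i7 (b₂, s) hm2
          linarith
    · intro b₂ s₂ hmS
      have hs2 : s₂ ≠ s := fun h => hmS (h ▸ hsm)
      have hnsm : ¬ SMatched st s₂ := by
        rintro ⟨b₃, hb₃⟩
        have hb3 : b₃ ≠ b := fun h => hun ⟨s₂, h ▸ hb₃⟩
        exact hmS ⟨b₃, (hmem _).2 (Or.inr ⟨hb₃, hb3, hs2⟩)⟩
      show Function.update st.PB b b' b₂ ≤ Function.update st.PS s b' s₂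
      rw [Function.update_of_ne hs2]
      by_cases hb2 : b₂ = b
      · subst hb2; rw [Function.update_self]
        exact hok.2 s₂ (hedge b₂ s₂) hnsm
      · rw [Function.update_of_ne hb2]
        exact i6 b₂ s₂ hnsm
    · intro p hp
      rcases (hmem p).1 hp with hpe | ⟨hpM, hp1, hp2⟩
      · subst hpe
        show Function.update st.PB b b' b = Function.update st.PS s b' s
        rw [Function.update_self, Function.update_self]
      · show Function.update st.PB b b' p.1 = Function.update st.PS s b' p.2
        rw [Function.update_of_ne hp1, Function.update_of_ne hp2]
        exact i7 p hpM
  | sellMatch s s' b hun hle hge hme hok hint hpri =>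
    have hs0 : 0 ≤ s' := le_trans (Mk.valS_nonneg s) hge
    have hs1 : s' ≤ 1 := le_trans hle (i2 s)
    have hPBb : s' ≤ st.PB b := by
      rcases hint.2 with ⟨_, h⟩ | ⟨_, h⟩ <;> linarith
    have hall : ∀ b₂, st.PB b₂ ≤ s' + ε := fun b₂ => by
      have := hok.1 b₂ (hedge b₂ s); linarith
    have hmem : ∀ p : B × S, p ∈ (matchPair st b s s').M ↔
        p = (b, s) ∨ (p ∈ st.M ∧ p.1 ≠ b ∧ p.2 ≠ s) := by
      intro p
      simp [matchPair, Finset.mem_insert, Finset.mem_filter, Prod.ext_iff]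
    have hbm : BMatched (matchPair st b s s') b := ⟨s, (hmem _).2 (Or.inl rfl)⟩
    have hsm : SMatched (matchPair st b s s') s := ⟨b, (hmem _).2 (Or.inl rfl)⟩
    refine ⟨?_, ?_, ?_, ?_, ?_, ?_, ?_⟩
    · intro b₂
      show 0 ≤ Function.update st.PB b s' b₂
      by_cases hb : b₂ = b
      · subst hb; rw [Function.update_self]; exact hs0
      · rw [Function.update_of_ne hb]; exact i1 b₂
    · intro s₂
      show Function.update st.PS s s' s₂ ≤ 1
      by_cases hs : s₂ = s
      · subst hs; rw [Function.update_self]; exact hs1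
      · rw [Function.update_of_ne hs]; exact i2 s₂
    · intro b₂
      show MulEps ε (Function.update st.PB b s' b₂)
      by_cases hb : b₂ = b
      · subst hb; rw [Function.update_self]; exact hme
      · rw [Function.update_of_ne hb]; exact i3 b₂
    · intro s₂
      show MulEps ε (Function.update st.PS s s' s₂)
      by_cases hs : s₂ = s
      · subst hs; rw [Function.update_self]; exact hme
      · rw [Function.update_of_ne hs]; exact i4 s₂
    · intro b₂ s₂ hm
      have hb2 : b₂ ≠ b := fun h => hm (h ▸ hbm)
      have hnb : ¬ BMatched st b₂ := by
        rintro ⟨s₃, hs₃⟩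
        have hs3 : s₃ ≠ s := fun h => hun ⟨b₂, h ▸ hs₃⟩
        exact hm ⟨s₃, (hmem _).2 (Or.inr ⟨hs₃, hb2, hs3⟩)⟩
      show Function.update st.PB b s' b₂ ≤ Function.update st.PS s s' s₂
      rw [Function.update_of_ne hb2]
      by_cases hs2 : s₂ = s
      · subst hs2; rw [Function.update_self]
        exact hok.2 b₂ (hedge b₂ s₂) hnb
      · rw [Function.update_of_ne hs2]
        exact i5 b₂ s₂ hnb
    · intro b₂ s₂ hmS
      have hs2 : s₂ ≠ s := fun h => hmS (h ▸ hsm)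
      have hcases : ¬ SMatched st s₂ ∨ (b, s₂) ∈ st.M := by
        by_contra hc
        push_neg at hc
        obtain ⟨⟨b₃, hb₃⟩, hn⟩ := hc
        have hb3 : b₃ ≠ b := fun h => hn (h ▸ hb₃)
        exact hmS ⟨b₃, (hmem _).2 (Or.inr ⟨hb₃, hb3, hs2⟩)⟩
      show Function.update st.PB b s' b₂ ≤ Function.update st.PS s s' s₂
      rw [Function.update_of_ne hs2]
      by_cases hb2 : b₂ = b
      · subst hb2; rw [Function.update_self]
        rcases hcases with hu | hm2
        · exact le_trans hPBb (i6 b₂ s₂ hu)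
        · have h3 : st.PB b₂ = st.PS s₂ := i7 (b₂, s₂) hm2
          rw [← h3]; exact hPBb
      · rw [Function.update_of_ne hb2]
        rcases hcases with hu | hm2
        · exact i6 b₂ s₂ hu
        · have hbm' : BMatched st b := ⟨s₂, hm2⟩
          have h1 : s' + ε ≤ st.PB b := by
            rcases hint.2 with ⟨h, _⟩ | ⟨_, h⟩
            · exact absurd hbm' h
            · exact h
          have h2 := hall b₂
          have h3 : st.PB b = st.PS s₂ := i7 (b, s₂) hm2
          linarith
    · intro p hp
      rcases (hmem p).1 hp with hpe | ⟨hpM, hp1, hp2⟩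
      · subst hpe
        show Function.update st.PB b s' b = Function.update st.PS s s' s
        rw [Function.update_self, Function.update_self]
      · show Function.update st.PB b s' p.1 = Function.update st.PS s s' p.2
        rw [Function.update_of_ne hp1, Function.update_of_ne hp2]
        exact i7 p hpM

lemma sum_update_eq {ι : Type*} [Fintype ι] [DecidableEq ι] (f : ι → ℝ) (i : ι) (v : ℝ) :
    ∑ x, Function.update f i v x = ∑ x, f x + (v - f i) :=
  sum_comp_update id f i v

lemma sum_one_sub_update {ι : Type*} [Fintype ι] [DecidableEq ι] (f : ι → ℝ) (i : ι) (v : ℝ) :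
    ∑ x, (1 - Function.update f i v x) = ∑ x, (1 - f x) + ((1 - v) - (1 - f i)) :=
  sum_comp_update (fun x => (1 : ℝ) - x) f i v

lemma phi_step (Mk : Market B S) {ε : ℝ} (hε : 0 < ε)
    {st st' : MState B S} (hI : DOAInv ε st) (h : Step Mk ε st st') : Phi st' ≤ Phi st := by
  obtain ⟨i1, i2, i3, i4, i5, i6, i7⟩ := hI
  cases h with
  | buyBid b b' hun hlt hle hme hok hni =>
    show (∑ s₂ : S, st.PS s₂) + ∑ b₂ : B, (1 - Function.update st.PB b b' b₂) ≤ Phi st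
    rw [sum_one_sub_update]
    unfold Phi
    linarith
  | sellOffer s s' hun hlt hge hme hok hni =>
    show (∑ s₂ : S, Function.update st.PS s s' s₂) + ∑ b₂ : B, (1 - st.PB b₂) ≤ Phi st
    rw [sum_update_eq]
    unfold Phi
    linarith
  | buyMatch b b' s hun hle hlev hme hok hint hpri =>
    show (∑ s₂ : S, Function.update st.PS s b' s₂)
        + ∑ b₂ : B, (1 - Function.update st.PB b b' b₂) ≤ Phi st
    rw [sum_update_eq, sum_one_sub_update]
    unfold Phi
    have := i5 b s hun
    linarith
  | sellMatch s s' b hun hle hge hme hok hint hpri =>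
    show (∑ s₂ : S, Function.update st.PS s s' s₂)
        + ∑ b₂ : B, (1 - Function.update st.PB b s' b₂) ≤ Phi st
    rw [sum_update_eq, sum_one_sub_update]
    unfold Phi
    have := i6 b s hun
    linarith

end Invariant


/-- on a complete bipartite trading graph (with `1` an integer multiple
of `ε`), the potential `Φ_P` is an integer multiple of `ε`, bounded above by `n`, and
non-increasing along any step that keeps the number of matched pairs constant. -/
theorem potential_nonincreasing_complete
    (Mk : Market B S) (hE : Mk.E = Finset.univ) (ε : ℝ) (hε : 0 < ε)
    (h1 : MulEps ε 1)
    (st₀ st : MState B S) (h₀ : ValidStart Mk ε st₀) (hr : Reachable Mk ε st₀ st) :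
    MulEps ε (Phi st) ∧
    Phi st ≤ (Fintype.card B + Fintype.card S : ℝ) ∧
    ∀ st', Step Mk ε st st' → st.M.card = st'.M.card → Phi st' ≤ Phi st := by
  have hinv : DOAInv ε st := by
    induction hr with
    | refl => exact inv_start Mk hE ε h₀
    | tail _ hstep ih => exact inv_step Mk hE hε ih hstep
  obtain ⟨i1, i2, i3, i4, i5, i6, i7⟩ := hinv
  refine ⟨?_, ?_, ?_⟩
  · exact (mulEps_sum _ _ fun s _ => i4 s).add'
      (mulEps_sum _ _ fun b _ => h1.sub' (i3 b))
  · have hS : ∑ s₂ : S, st.PS s₂ ≤ (Fintype.card S : ℝ) := by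
      calc ∑ s₂ : S, st.PS s₂ ≤ ∑ _s₂ : S, (1 : ℝ) :=
            Finset.sum_le_sum fun s₂ _ => i2 s₂
        _ = (Fintype.card S : ℝ) := by simp
    have hB : ∑ b₂ : B, (1 - st.PB b₂) ≤ (Fintype.card B : ℝ) := by
      calc ∑ b₂ : B, (1 - st.PB b₂) ≤ ∑ _b₂ : B, (1 : ℝ) :=
            Finset.sum_le_sum fun b₂ _ => by linarith [i1 b₂]
        _ = (Fintype.card B : ℝ) := by simp
    unfold Phi
    linarith
  · intro st' hs _
    exact phi_step Mk hε ⟨i1, i2, i3, i4, i5, i6, i7⟩ hs
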